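/- Let r ≥ 2 and d ≥ 1 be integers and set n = (r-1)(d+1)+1. For any points x_1, …, x_n in ℝ^d (i.e., any map x : Fin n → ℝ^d) there exists a partition of the index set {1,…,n} into r pairwise disjoint sets A_1, …, A_r covering all indices such that the convex hulls conv{x_i : i ∈ A_1}, …, conv{x_i : i ∈ A_r} have a common point. -/

import Mathlib

open Finset Metric
open scoped RealInnerProductSpace

section CC

variable {E : Type*} [NormedAddCommGroup E] [InnerProductSpace ℝ E]

/-- Moving from `q` towards `z` strictly decreases the norm when `⟪q, z - q⟫ < 0`. -/
lemma exists_segment_norm_lt {q z : E} (h : ⟪q, z - q⟫ < 0) :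
    ∃ t : ℝ, 0 ≤ t ∧ t ≤ 1 ∧ ‖q + t • (z - q)‖ < ‖q‖ := by
  have hzq : z - q ≠ 0 := by
    intro h0
    rw [h0, inner_zero_right] at h
    exact lt_irrefl 0 h
  have hzq2 : (0:ℝ) < ‖z - q‖ ^ 2 := pow_pos (norm_pos_iff.2 hzq) 2
  set a : ℝ := ⟪q, z - q⟫ with ha
  set t : ℝ := min 1 (-a / ‖z - q‖ ^ 2) with ht
  have ht0 : 0 < t := lt_min one_pos (div_pos (neg_pos.2 h) hzq2)
  have ht1 : t ≤ 1 := min_le_left _ _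
  have htle : t * ‖z - q‖ ^ 2 ≤ -a := by
    have := min_le_right 1 (-a / ‖z - q‖ ^ 2)
    calc t * ‖z - q‖ ^ 2 ≤ (-a / ‖z - q‖ ^ 2) * ‖z - q‖ ^ 2 := by
          apply mul_le_mul_of_nonneg_right this (le_of_lt hzq2)
      _ = -a := div_mul_cancel₀ _ (ne_of_gt hzq2)
  refine ⟨t, le_of_lt ht0, ht1, ?_⟩
  have hsq : ‖q + t • (z - q)‖ ^ 2 < ‖q‖ ^ 2 := by
    rw [norm_add_sq_real]
    have h1 : ⟪q, t • (z - q)⟫ = t * a := real_inner_smul_right _ _ _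
    have h2 : ‖t • (z - q)‖ ^ 2 = t ^ 2 * ‖z - q‖ ^ 2 := by
      rw [norm_smul, mul_pow, Real.norm_eq_abs, sq_abs]
    rw [h1, h2]
    nlinarith [ht0, htle, h]
  exact lt_of_pow_lt_pow_left₀ 2 (norm_nonneg q) hsq

/-- **Colorful Carathéodory theorem** (Bárány). -/
lemma colorful_caratheodory [FiniteDimensional ℝ E] {N r : ℕ}
    (hE : Module.finrank ℝ E = N) (hr : 0 < r) (f : Fin (N + 1) → Fin r → E)
    (hf : ∀ i, (0 : E) ∈ convexHull ℝ (Set.range (f i))) :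
    ∃ c : Fin (N + 1) → Fin r, (0 : E) ∈ convexHull ℝ (Set.range fun i => f i (c i)) := by
  haveI : Nonempty (Fin r) := ⟨⟨0, hr⟩⟩
  classical
  set K : (Fin (N + 1) → Fin r) → Set E :=
    fun c => convexHull ℝ (Set.range fun i => f i (c i)) with hK
  have hKne : ∀ c, (K c).Nonempty := fun c =>
    convexHull_nonempty_iff.2 (Set.range_nonempty _)
  have hKcp : ∀ c, IsCompact (K c) := fun c => (Set.finite_range _).isCompact_convexHull ℝ
  have hKcv : ∀ c, Convex ℝ (K c) := fun c => convex_convexHull _ _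
  obtain ⟨c, hc⟩ := Finite.exists_min (fun c => infDist 0 (K c))
  obtain ⟨q, hqK, hq⟩ := (hKcp c).exists_infDist_eq_dist (hKne c) 0
  by_cases hq0 : q = 0
  · exact ⟨c, hq0 ▸ hqK⟩
  exfalso
  set g : Fin (N + 1) → E := fun i => f i (c i) with hg
  -- the nearest point inequality
  have hnorm : ‖(0:E) - q‖ = ⨅ w : K c, ‖(0:E) - w‖ := by
    rw [zero_sub, norm_neg, ← dist_zero_right q, dist_comm, ← hq, infDist_eq_iInf]
    congr 1
    funext w
    rw [zero_sub, norm_neg, dist_comm, dist_zero_right]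
  have hnear : ∀ z ∈ K c, ⟪q, z - q⟫ ≥ 0 := by
    intro z hz
    have := (norm_eq_iInf_iff_real_inner_le_zero (hKcv c) hqK).1 hnorm z hz
    rw [zero_sub, inner_neg_left] at this
    linarith
  have hqnorm : (0:ℝ) < ‖q‖ ^ 2 := pow_pos (norm_pos_iff.2 hq0) 2
  have hyp : ∀ z ∈ K c, ‖q‖ ^ 2 ≤ ⟪q, z⟫ := by
    intro z hz
    have h1 := hnear z hz
    rw [inner_sub_right, real_inner_self_eq_norm_sq] at h1
    linarith
  -- q is a convex combination of points of g lying on the supporting hyperplane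
  set P : Set E := {p | p ∈ Set.range g ∧ ⟪q, p⟫ = ‖q‖ ^ 2} with hP
  have hqP : q ∈ convexHull ℝ P := by
    have hq1 : q ∈ convexHull ℝ (Set.range g) := hqK
    rw [convexHull_range_eq_exists_affineCombination] at hq1
    obtain ⟨s, w, hw0, hw1, hrep⟩ := hq1
    rw [s.affineCombination_eq_linear_combination _ _ hw1] at hrep
    set s' : Finset (Fin (N + 1)) := s.filter (fun i => w i ≠ 0) with hs'
    have hsub : s' ⊆ s := Finset.filter_subset _ _
    have hw1' : ∑ i ∈ s', w i = 1 := by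
      rw [hs', Finset.sum_filter_ne_zero]; exact hw1
    have hrep' : ∑ i ∈ s', w i • g i = q := by
      rw [← hrep, hs']
      exact Finset.sum_filter_of_ne (fun i _ hne h0 => hne (by rw [h0, zero_smul]))
    have hw0' : ∀ i ∈ s', 0 ≤ w i := fun i hi => hw0 i (hsub hi)
    have hmem : ∀ i ∈ s', g i ∈ P := by
      intro i hi
      refine ⟨Set.mem_range_self i, ?_⟩
      by_contra hne
      have hgK : ∀ i' : Fin (N + 1), g i' ∈ K c :=
        fun i' => subset_convexHull ℝ _ (Set.mem_range_self i')
      have hgt : ‖q‖ ^ 2 < ⟪q, g i⟫ :=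
        lt_of_le_of_ne (hyp (g i) (hgK i)) (fun h => hne h.symm)
      have hwi : 0 < w i :=
        lt_of_le_of_ne (hw0' i hi) (Ne.symm (Finset.mem_filter.1 hi).2)
      have hsum : ∑ j ∈ s', w j * ⟪q, g j⟫ = ‖q‖ ^ 2 := by
        have h' := congrArg (fun z : E => (⟪q, z⟫ : ℝ)) hrep'
        simpa [inner_sum, real_inner_smul_right, real_inner_self_eq_norm_sq] using h'
      have hge : ∀ j ∈ s', w j * ‖q‖ ^ 2 ≤ w j * ⟪q, g j⟫ :=
        fun j hj => mul_le_mul_of_nonneg_left (hyp _ (hgK j)) (hw0' j hj)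
      have hsum2 : ∑ j ∈ s', w j * ‖q‖ ^ 2 = ‖q‖ ^ 2 := by
        rw [← Finset.sum_mul, hw1', one_mul]
      have hstrict : ∑ j ∈ s', w j * ‖q‖ ^ 2 < ∑ j ∈ s', w j * ⟪q, g j⟫ :=
        Finset.sum_lt_sum hge ⟨i, hi, mul_lt_mul_of_pos_left hgt hwi⟩
      rw [hsum2, hsum] at hstrict
      exact lt_irrefl _ hstrict
    have hcm : s'.centerMass w g ∈ convexHull ℝ P :=
      Finset.centerMass_mem_convexHull s' hw0' (by rw [hw1']; exact one_pos) hmem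
    rwa [Finset.centerMass_eq_of_sum_1 _ _ hw1', hrep'] at hcm
  -- Caratheodory: q is in the hull of an affinely independent subset of P
  rw [convexHull_eq_union] at hqP
  simp only [Set.mem_iUnion, exists_prop] at hqP
  obtain ⟨T, hTP, hTai, hqT⟩ := hqP
  have hTne : T.Nonempty := by
    obtain ⟨p, hp⟩ := convexHull_nonempty_iff.1 ⟨q, hqT⟩
    exact ⟨p, hp⟩
  -- the affinely independent subset lies in a hyperplane, so it has at most N elements
  set L : Module.Dual ℝ E := (innerSL ℝ q).toLinearMap with hL
  have hLz : ∀ z : E, L z = ⟪q, z⟫ := fun z => rfl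
  have hL0 : L ≠ 0 := by
    intro h0
    have : L q = 0 := by rw [h0]; rfl
    rw [hLz, real_inner_self_eq_norm_sq] at this
    exact (ne_of_gt hqnorm) this
  have hker : Module.finrank ℝ (LinearMap.ker L) + 1 = Module.finrank ℝ E :=
    Module.Dual.finrank_ker_add_one_of_ne_zero hL0
  have hspan : vectorSpan ℝ (↑T : Set E) ≤ LinearMap.ker L := by
    rw [vectorSpan_def, Submodule.span_le]
    rintro u hu
    rw [Set.mem_vsub] at hu
    obtain ⟨p1, hp1, p2, hp2, rfl⟩ := hu
    have h1 := (hTP hp1).2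
    have h2 := (hTP hp2).2
    rw [SetLike.mem_coe, LinearMap.mem_ker]
    show (L (p1 - p2) : ℝ) = 0
    rw [hLz, inner_sub_right, h1, h2, sub_self]
  have hcard : T.card ≤ N := by
    have hc1 : Fintype.card {x // x ∈ T} = (T.card - 1) + 1 := by
      rw [Fintype.card_coe]
      have := Finset.card_pos.2 hTne
      omega
    have h1 : Module.finrank ℝ (vectorSpan ℝ (Set.range ((↑) : {x // x ∈ T} → E)))
        = T.card - 1 := hTai.finrank_vectorSpan hc1
    have hspan' : vectorSpan ℝ (Set.range ((↑) : {x // x ∈ T} → E)) ≤ LinearMap.ker L := by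
      rw [Subtype.range_coe]
      exact hspan
    have h2 := Submodule.finrank_mono hspan'
    rw [h1, hE] at *
    have hpos := Finset.card_pos.2 hTne
    omega
  -- choose for each point of T an index realizing it
  have hsel : ∀ p : {x // x ∈ T}, ∃ i : Fin (N + 1), g i = (p : E) :=
    fun p => (hTP p.2).1
  choose sel hsel' using hsel
  have hI : ∃ i0 : Fin (N + 1), ∀ p : {x // x ∈ T}, sel p ≠ i0 := by
    by_contra hcon
    push_neg at hcon
    have hsurj : Function.Surjective sel := fun i => (hcon i)
    have hle := Fintype.card_le_of_surjective sel hsurj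
    rw [Fintype.card_coe, Fintype.card_fin] at hle
    omega
  obtain ⟨i0, hi0⟩ := hI
  -- pick a color j of the unused index pointing to the other side
  have hj : ∃ j : Fin r, ⟪q, f i0 j⟫ ≤ 0 := by
    by_contra hcon
    push_neg at hcon
    have hsub2 : Set.range (f i0) ⊆ {z : E | (0:ℝ) < ⟪q, z⟫} := by
      rintro z ⟨j, rfl⟩
      exact hcon j
    have hcv : Convex ℝ {z : E | (0:ℝ) < ⟪q, z⟫} :=
      convex_halfSpace_gt (LinearMap.isLinear (innerSL ℝ q).toLinearMap) 0
    have h0 := convexHull_min hsub2 hcv (hf i0)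
    rw [Set.mem_setOf_eq, inner_zero_right] at h0
    exact lt_irrefl _ h0
  obtain ⟨j, hj⟩ := hj
  set c' : Fin (N + 1) → Fin r := Function.update c i0 j with hc'
  have hg'i0 : f i0 (c' i0) = f i0 j := by rw [hc', Function.update_self]
  have hzmem : f i0 j ∈ K c' := by
    rw [← hg'i0]
    exact subset_convexHull ℝ _ (Set.mem_range_self i0)
  have hTsub : (↑T : Set E) ⊆ Set.range fun i => f i (c' i) := by
    intro p hp
    refine ⟨sel ⟨p, hp⟩, ?_⟩
    show f (sel ⟨p, hp⟩) (c' (sel ⟨p, hp⟩)) = p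
    rw [hc', Function.update_of_ne (hi0 ⟨p, hp⟩)]
    exact hsel' ⟨p, hp⟩
  have hqmem : q ∈ K c' := convexHull_mono hTsub hqT
  have hlt : ⟪q, f i0 j - q⟫ < 0 := by
    rw [inner_sub_right, real_inner_self_eq_norm_sq]
    linarith
  obtain ⟨t, ht0, ht1, hlt'⟩ := exists_segment_norm_lt hlt
  have hmem' : q + t • (f i0 j - q) ∈ K c' :=
    (hKcv c').add_smul_sub_mem hqmem hzmem ⟨ht0, ht1⟩
  have h1 : infDist 0 (K c') ≤ ‖q + t • (f i0 j - q)‖ := by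
    have h' := infDist_le_dist_of_mem (x := (0:E)) hmem'
    rwa [dist_comm, dist_zero_right] at h'
  have h2 := hc c'
  rw [hq, dist_comm, dist_zero_right] at h2
  linarith

end CC

/-- Summing a Kronecker-delta-like function over `Fin r`. -/
lemma fin_sum_delta {r m : ℕ} (hm : m < r) (F : Fin r → ℝ) :
    ∑ j : Fin r, (if (j : ℕ) = m then F j else 0) = F ⟨m, hm⟩ := by
  rw [Finset.sum_eq_single (⟨m, hm⟩ : Fin r)]
  · simp
  · intro b _ hb
    have hbm : (b : ℕ) ≠ m := fun h => hb (Fin.ext h)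
    simp [hbm]
  · simp

/-- Coordinates of a finite sum in a `EuclideanSpace`. -/
lemma eucl_sum_apply {ι κ : Type*} [Fintype κ] (s : Finset ι)
    (G : ι → EuclideanSpace ℝ κ) (a : κ) : (∑ i ∈ s, G i) a = ∑ i ∈ s, G i a := by
  have h := map_sum (PiLp.projₗ (𝕜 := ℝ) 2 (fun _ : κ => ℝ) a) G s
  simp only [PiLp.projₗ_apply] at h
  exact h

/-- **Tverberg's theorem** (1966). For `r ≥ 2`, `d ≥ 1` and `n = (r-1)(d+1)+1`,
any `n` points in `ℝ^d` can be partitioned into `r` pairwise disjoint sets covering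
all indices whose convex hulls have a common point. -/
theorem tverberg (r d : ℕ) (hr : 2 ≤ r) (hd : 1 ≤ d)
    (x : Fin ((r - 1) * (d + 1) + 1) → EuclideanSpace ℝ (Fin d)) :
    ∃ A : Fin r → Set (Fin ((r - 1) * (d + 1) + 1)),
      Pairwise (Function.onFun Disjoint A) ∧
      (⋃ j, A j) = Set.univ ∧
      (⋂ j, convexHull ℝ (x '' A j)).Nonempty := by
  classical
  have hrpos : 0 < r := by omega
  have hr1 : r - 1 < r := by omega
  have hE : Module.finrank ℝ (EuclideanSpace ℝ (Fin (r - 1) × Fin (d + 1))) = (r - 1) * (d + 1) := by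
    rw [finrank_euclideanSpace]
    simp
  set y : Fin ((r - 1) * (d + 1) + 1) → Fin (d + 1) → ℝ := fun i => Fin.snoc (x i) 1 with hy
  set v : Fin r → Fin (r - 1) → ℝ := fun j k =>
    (if (j : ℕ) = (k : ℕ) then 1 else 0) - (if (j : ℕ) = r - 1 then 1 else 0) with hvdef
  have hv : ∀ k : Fin (r - 1), ∑ j : Fin r, v j k = 0 := by
    intro k
    have hk : (k : ℕ) < r := lt_of_lt_of_le k.2 (Nat.sub_le r 1)
    simp only [hvdef, Finset.sum_sub_distrib]
    rw [fin_sum_delta hk (fun _ => (1 : ℝ)), fin_sum_delta hr1 (fun _ => (1 : ℝ))]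
    ring
  set f : Fin ((r - 1) * (d + 1) + 1) → Fin r → EuclideanSpace ℝ (Fin (r - 1) × Fin (d + 1)) :=
    fun i j => WithLp.toLp 2 (fun km : Fin (r - 1) × Fin (d + 1) => v j km.1 * y i km.2) with hfdef
  have hfap : ∀ i j km, f i j km = v j km.1 * y i km.2 := fun _ _ _ => rfl
  have hsumf : ∀ i, ∑ j : Fin r, f i j = 0 := by
    intro i
    ext km
    rw [eucl_sum_apply]
    simp only [hfap]
    rw [← Finset.sum_mul, hv km.1, zero_mul]
    rfl
  have hf0 : ∀ i, (0 : EuclideanSpace ℝ (Fin (r - 1) × Fin (d + 1))) ∈ convexHull ℝ (Set.range (f i)) := by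
    intro i
    have hcm : Finset.univ.centerMass (fun _ : Fin r => (1 : ℝ)) (f i) = 0 := by
      rw [Finset.centerMass]
      simp only [one_smul, hsumf i, smul_zero]
    have h := Finset.centerMass_mem_convexHull (Finset.univ : Finset (Fin r))
      (w := fun _ => (1 : ℝ)) (fun _ _ => zero_le_one)
      (by simp; positivity) (fun j _ => Set.mem_range_self (f := f i) j)
    rwa [hcm] at h
  obtain ⟨c, hc⟩ := colorful_caratheodory hE hrpos f hf0
  rw [convexHull_range_eq_exists_affineCombination] at hc
  obtain ⟨s, w0, hw0, hw1, hrep⟩ := hc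
  rw [s.affineCombination_eq_linear_combination _ _ hw1] at hrep
  set W : Fin ((r - 1) * (d + 1) + 1) → ℝ := fun i => if i ∈ s then w0 i else 0 with hW
  have hWnn : ∀ i, 0 ≤ W i := by
    intro i
    by_cases h : i ∈ s
    · simp [hW, h, hw0 i h]
    · simp [hW, h]
  have hWsum : ∑ i, W i = 1 := by
    rw [hW]
    simp only [Finset.sum_ite_mem, Finset.univ_inter]
    exact hw1
  have hWrep : ∑ i, W i • f i (c i) = 0 := by
    rw [hW]
    simp only [ite_smul, zero_smul, Finset.sum_ite_mem, Finset.univ_inter]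
    exact hrep
  -- the partition
  set A : Fin r → Set (Fin ((r - 1) * (d + 1) + 1)) := fun j => {i | c i = j} with hA
  refine ⟨A, ?_, ?_, ?_⟩
  · intro j j' hjj'
    rw [Function.onFun, Set.disjoint_left]
    rintro i (hi : c i = j) (hi' : c i = j')
    exact hjj' (hi ▸ hi')
  · ext i
    simp only [Set.mem_iUnion, Set.mem_univ, iff_true]
    exact ⟨c i, rfl⟩
  -- the common point
  set fib : Fin r → Finset (Fin ((r - 1) * (d + 1) + 1)) :=
    fun j => Finset.univ.filter (fun i => c i = j) with hfib
  set t : Fin r → ℝ := fun j => ∑ i ∈ fib j, W i with ht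
  set u : Fin r → Fin (d + 1) → ℝ := fun j m => ∑ i ∈ fib j, W i * y i m with hu
  have hcoord : ∀ (k : Fin (r - 1)) (m : Fin (d + 1)), ∑ j : Fin r, v j k * u j m = 0 := by
    intro k m
    have h0 : ∑ i, W i * (v (c i) k * y i m) = 0 := by
      have h' : (∑ i, W i • f i (c i)) ((k, m)) = (0 : ℝ) := by rw [hWrep]; rfl
      rw [eucl_sum_apply] at h'
      exact h'
    rw [← h0, ← Finset.sum_fiberwise_of_maps_to (fun i _ => Finset.mem_univ (c i))
      (fun i => W i * (v (c i) k * y i m))]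
    refine Finset.sum_congr rfl fun j _ => ?_
    rw [hu, Finset.mul_sum]
    refine Finset.sum_congr rfl fun i hi => ?_
    have hci : c i = j := (Finset.mem_filter.1 hi).2
    rw [hci]
    ring
  set jl : Fin r := ⟨r - 1, hr1⟩ with hjl
  have hueq : ∀ (j : Fin r) (m : Fin (d + 1)), u j m = u jl m := by
    intro j m
    by_cases hj : (j : ℕ) = r - 1
    · rw [show j = jl from Fin.ext hj]
    · have hjk : (j : ℕ) < r - 1 := by have := j.2; omega
      have hc1 := hcoord ⟨(j : ℕ), hjk⟩ m
      simp only [hvdef, sub_mul, Finset.sum_sub_distrib, ite_mul, one_mul, zero_mul] at hc1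
      rw [fin_sum_delta (show ((⟨(j : ℕ), hjk⟩ : Fin (r-1)) : ℕ) < r from j.2) (fun j' => u j' m),
        fin_sum_delta hr1 (fun j' => u j' m)] at hc1
      simp only [Fin.eta] at hc1
      have : u j m - u jl m = 0 := hc1
      linarith
  have hy1 : ∀ i, y i (Fin.last d) = 1 := fun i => Fin.snoc_last _ _
  have hteq : ∀ j, t j = t jl := by
    intro j
    have h := hueq j (Fin.last d)
    simp only [hu, hy1, mul_one] at h
    exact h
  have htsum : ∑ j, t j = 1 := by
    rw [← hWsum, ht]
    exact Finset.sum_fiberwise_of_maps_to (fun i _ => Finset.mem_univ (c i)) W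
  have htl : t jl = (r : ℝ)⁻¹ := by
    have h : (r : ℝ) * t jl = 1 := by
      rw [← htsum]
      rw [Finset.sum_congr rfl fun j _ => hteq j]
      simp [Finset.sum_const, mul_comm]
    field_simp at h ⊢
    linarith
  have htpos : 0 < t jl := by
    rw [htl]
    positivity
  set X : Fin r → EuclideanSpace ℝ (Fin d) := fun j => ∑ i ∈ fib j, W i • x i with hX
  have hXu : ∀ (j : Fin r) (m : Fin d), X j m = u j (Fin.castSucc m) := by
    intro j m
    simp only [hX]
    rw [eucl_sum_apply, hu]
    refine Finset.sum_congr rfl fun i _ => ?_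
    have hxy : y i (Fin.castSucc m) = x i m := Fin.snoc_castSucc _ _ _
    rw [hxy]
    rfl
  have hXeq : ∀ j, X j = X jl := by
    intro j
    ext m
    rw [hXu j m, hXu jl m, hueq j]
  refine ⟨(t jl)⁻¹ • X jl, Set.mem_iInter.2 fun j => ?_⟩
  have hmem := Finset.centerMass_mem_convexHull (fib j) (w := W) (z := x)
    (fun i _ => hWnn i)
    (by rw [show ∑ i ∈ fib j, W i = t j from rfl, hteq j]; exact htpos)
    (s := x '' A j) (fun i hi => ⟨i, (Finset.mem_filter.1 hi).2, rfl⟩)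
  rwa [Finset.centerMass, show ∑ i ∈ fib j, W i = t j from rfl, hteq j,
    show ∑ i ∈ fib j, W i • x i = X j from rfl, hXeq j] at hmem
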